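/- In the three-constant family solving the τ = 0 closed-4-form system (3f' = 2(f₁+f₂+f₃), (ff_jf_k)' = 6f₁f₂f₃ for each cyclic (i,j,k) with appropriate signs), given by f⁹ = C⁹(u+a₁)(u+a₂)(u+a₃) and f_i = √(6/C)·((u+a_j)⁴(u+a_k)⁴/(u+a_i)⁵)^{1/9}, the differential ideal condition f(f_if_j)' - f'f_if_j + 2f₁f₂f₃ - 2f_if_j(f_i+f_j) = 0 holds for all cyclic (i,j,k) if and only if a₁ = a₂ = a₃. -/

import Mathlib

/-- `qkF C a₁ a₂ a₃ u = C((u+a₁)(u+a₂)(u+a₃))^{1/9}`. -/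
noncomputable def qkF (C a₁ a₂ a₃ : ℝ) : ℝ → ℝ :=
  fun u => C * ((u + a₁) * (u + a₂) * (u + a₃)) ^ ((1 : ℝ)/9)

/-- `qkFi C ai aj ak u = √(6/C)·((u+aj)⁴(u+ak)⁴/(u+ai)⁵)^{1/9}`. -/
noncomputable def qkFi (C ai aj ak : ℝ) : ℝ → ℝ :=
  fun u => Real.sqrt (6 / C) *
    (((u + aj) ^ 4 * (u + ak) ^ 4) / (u + ai) ^ 5) ^ ((1 : ℝ)/9)

/-- The derivative `'` in the time variable `t`, where `du = f₁f₂f₃ dt`,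
expressed in the variable `u`. -/
noncomputable def qkD (C a₁ a₂ a₃ : ℝ) (G : ℝ → ℝ) : ℝ → ℝ :=
  fun u => qkFi C a₁ a₂ a₃ u * qkFi C a₂ a₃ a₁ u * qkFi C a₃ a₁ a₂ u * deriv G u

lemma qk_pow9 {x : ℝ} (hx : 0 < x) : (x ^ ((1:ℝ)/9)) ^ (9:ℕ) = x := by
  rw [← Real.rpow_natCast (x ^ ((1:ℝ)/9)) 9, ← Real.rpow_mul hx.le]
  norm_num

lemma qk_pown {x : ℝ} (hx : 0 < x) (n : ℕ) :
    (x ^ n) ^ ((1:ℝ)/9) = (x ^ ((1:ℝ)/9)) ^ n := by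
  rw [← Real.rpow_natCast x n, ← Real.rpow_mul hx.le,
    ← Real.rpow_natCast (x ^ ((1:ℝ)/9)) n, ← Real.rpow_mul hx.le, mul_comm]

lemma qk_hqv {x₁ x₂ x₃ : ℝ} (h1 : 0 < x₁) (h2 : 0 < x₂) (h3 : 0 < x₃) :
    ((x₂ ^ 4 * x₃ ^ 4) / x₁ ^ 5) ^ ((1:ℝ)/9)
      = (x₂ ^ ((1:ℝ)/9)) ^ 4 * (x₃ ^ ((1:ℝ)/9)) ^ 4 / (x₁ ^ ((1:ℝ)/9)) ^ 5 := by
  rw [Real.div_rpow (by positivity) (by positivity),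
    Real.mul_rpow (by positivity) (by positivity), qk_pown h2, qk_pown h3, qk_pown h1]

lemma qk_alg1 (s x₁ x₂ x₃ A : ℝ) (h1 : x₁ ≠ 0) (h2 : x₂ ≠ 0) (h3 : x₃ ≠ 0) :
    s * A * (4/(9*x₂) + 4/(9*x₃) - 5/(9*x₁))
      = s * (((↑(4:ℕ) * x₂ ^ (4-1) * 1 * x₃ ^ 4 + x₂ ^ 4 * (↑(4:ℕ) * x₃ ^ (4-1) * 1)) * x₁ ^ 5
            - x₂ ^ 4 * x₃ ^ 4 * (↑(5:ℕ) * x₁ ^ (5-1) * 1)) / (x₁ ^ 5) ^ 2 * ((1:ℝ)/9)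
            * (A / (x₂ ^ 4 * x₃ ^ 4 / x₁ ^ 5))) := by
  field_simp
  ring

lemma qk_alg2 (c x₁ x₂ x₃ A : ℝ) (h1 : x₁ ≠ 0) (h2 : x₂ ≠ 0) (h3 : x₃ ≠ 0) :
    c * A * (1/(9*x₁) + 1/(9*x₂) + 1/(9*x₃))
      = c * (((1 * x₂ + x₁ * 1) * x₃ + x₁ * x₂ * 1) * ((1:ℝ)/9) * (A / (x₁ * x₂ * x₃))) := by
  field_simp

lemma qkFi_hasDeriv (C b₁ b₂ b₃ u : ℝ) (h1 : 0 < u + b₁) (h2 : 0 < u + b₂)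
    (h3 : 0 < u + b₃) :
    HasDerivAt (qkFi C b₁ b₂ b₃)
      (qkFi C b₁ b₂ b₃ u * (4/(9*(u+b₂)) + 4/(9*(u+b₃)) - 5/(9*(u+b₁)))) u := by
  have hb1 : HasDerivAt (fun v : ℝ => v + b₁) 1 u := (hasDerivAt_id u).add_const b₁
  have hb2 : HasDerivAt (fun v : ℝ => v + b₂) 1 u := (hasDerivAt_id u).add_const b₂
  have hb3 : HasDerivAt (fun v : ℝ => v + b₃) 1 u := (hasDerivAt_id u).add_const b₃
  have hN := (hb2.pow 4).mul (hb3.pow 4)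
  have hD := hb1.pow 5
  have hh := hN.div hD (by show (u + b₁) ^ 5 ≠ 0; positivity)
  have hne : ((u + b₂) ^ 4 * (u + b₃) ^ 4) / (u + b₁) ^ 5 ≠ 0 := by positivity
  have := (hh.rpow_const (p := (1:ℝ)/9) (Or.inl hne)).const_mul (Real.sqrt (6/C))
  refine this.congr_deriv ?_
  simp only [Pi.mul_apply, Pi.div_apply, Pi.pow_apply]
  rw [Real.rpow_sub_one hne]
  simp only [qkFi]
  exact (qk_alg1 _ _ _ _ _ h1.ne' h2.ne' h3.ne').symm

lemma qkF_hasDeriv (C b₁ b₂ b₃ u : ℝ) (h1 : 0 < u + b₁) (h2 : 0 < u + b₂)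
    (h3 : 0 < u + b₃) :
    HasDerivAt (qkF C b₁ b₂ b₃)
      (qkF C b₁ b₂ b₃ u * (1/(9*(u+b₁)) + 1/(9*(u+b₂)) + 1/(9*(u+b₃)))) u := by
  have hb1 : HasDerivAt (fun v : ℝ => v + b₁) 1 u := (hasDerivAt_id u).add_const b₁
  have hb2 : HasDerivAt (fun v : ℝ => v + b₂) 1 u := (hasDerivAt_id u).add_const b₂
  have hb3 : HasDerivAt (fun v : ℝ => v + b₃) 1 u := (hasDerivAt_id u).add_const b₃
  have hp := (hb1.mul hb2).mul hb3
  have hne : (u + b₁) * (u + b₂) * (u + b₃) ≠ 0 := by positivity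
  have := (hp.rpow_const (p := (1:ℝ)/9) (Or.inl hne)).const_mul C
  refine this.congr_deriv ?_
  simp only [Pi.mul_apply, Pi.div_apply, Pi.pow_apply]
  rw [Real.rpow_sub_one hne]
  simp only [qkF]
  exact (qk_alg2 _ _ _ _ _ h1.ne' h2.ne' h3.ne').symm

lemma qk_key (C b₁ b₂ b₃ u : ℝ) (hC : 0 < C) (h1 : 0 < u + b₁) (h2 : 0 < u + b₂)
    (h3 : 0 < u + b₃) :
    qkF C b₁ b₂ b₃ u * qkD C b₁ b₂ b₃ (fun v => qkFi C b₁ b₂ b₃ v * qkFi C b₂ b₃ b₁ v) u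
      - qkD C b₁ b₂ b₃ (qkF C b₁ b₂ b₃) u * (qkFi C b₁ b₂ b₃ u * qkFi C b₂ b₃ b₁ u)
      + 2 * (qkFi C b₁ b₂ b₃ u * qkFi C b₂ b₃ b₁ u * qkFi C b₃ b₁ b₂ u)
      - 2 * (qkFi C b₁ b₂ b₃ u) ^ 2 * qkFi C b₂ b₃ b₁ u
      - 2 * qkFi C b₁ b₂ b₃ u * (qkFi C b₂ b₃ b₁ u) ^ 2
    = (10/3) * Real.sqrt (6/C) ^ 3 * ((u+b₃) ^ ((1:ℝ)/9)) ^ 3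
        / (((u+b₁) ^ ((1:ℝ)/9)) ^ 6 * ((u+b₂) ^ ((1:ℝ)/9)) ^ 6)
        * (2*(u+b₁)*(u+b₂) - (u+b₃)*(u+b₁) - (u+b₃)*(u+b₂)) := by
  have d1 := qkFi_hasDeriv C b₁ b₂ b₃ u h1 h2 h3
  have d2 := qkFi_hasDeriv C b₂ b₃ b₁ u h2 h3 h1
  have dF := qkF_hasDeriv C b₁ b₂ b₃ u h1 h2 h3
  simp only [qkD]
  rw [HasDerivAt.deriv (f := fun v => qkFi C b₁ b₂ b₃ v * qkFi C b₂ b₃ b₁ v) (d1.mul d2), dF.deriv]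
  simp only [qkFi, qkF]
  rw [show ((u+b₁)*(u+b₂)*(u+b₃)) ^ ((1:ℝ)/9)
        = (u+b₁)^((1:ℝ)/9) * (u+b₂)^((1:ℝ)/9) * (u+b₃)^((1:ℝ)/9) from by
      rw [Real.mul_rpow (by positivity) (by positivity),
        Real.mul_rpow (by positivity) (by positivity)]]
  rw [qk_hqv h1 h2 h3, qk_hqv h2 h3 h1, qk_hqv h3 h1 h2]
  have hy1p : 0 < (u+b₁) ^ ((1:ℝ)/9) := Real.rpow_pos_of_pos h1 _
  have hy2p : 0 < (u+b₂) ^ ((1:ℝ)/9) := Real.rpow_pos_of_pos h2 _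
  have hy3p : 0 < (u+b₃) ^ ((1:ℝ)/9) := Real.rpow_pos_of_pos h3 _
  have hq1 := qk_pow9 h1
  have hq2 := qk_pow9 h2
  have hq3 := qk_pow9 h3
  have hsp : 0 < Real.sqrt (6/C) := Real.sqrt_pos.2 (by positivity)
  have hs6 : Real.sqrt (6/C) ^ 2 * C = 6 := by
    rw [Real.sq_sqrt (by positivity : (0:ℝ) ≤ 6/C)]
    field_simp
  generalize hy₁ : (u + b₁) ^ ((1:ℝ)/9) = y₁ at hy1p hq1 ⊢
  generalize hy₂ : (u + b₂) ^ ((1:ℝ)/9) = y₂ at hy2p hq2 ⊢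
  generalize hy₃ : (u + b₃) ^ ((1:ℝ)/9) = y₃ at hy3p hq3 ⊢
  generalize hgs : Real.sqrt (6/C) = s at hsp hs6 ⊢
  rw [← hq1, ← hq2, ← hq3]
  have hC6 : C = 6 / s ^ 2 := by
    field_simp
    linarith [hs6]
  rw [hC6]
  have h9 : (9:ℕ) ≠ 0 := by norm_num
  field_simp
  ring

lemma qkF_perm (C b₁ b₂ b₃ : ℝ) : qkF C b₂ b₃ b₁ = qkF C b₁ b₂ b₃ := by
  funext u
  simp only [qkF]
  rw [show (u+b₂)*(u+b₃)*(u+b₁) = (u+b₁)*(u+b₂)*(u+b₃) from by ring]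

lemma qkD_perm (C b₁ b₂ b₃ : ℝ) (G : ℝ → ℝ) (u : ℝ) :
    qkD C b₂ b₃ b₁ G u = qkD C b₁ b₂ b₃ G u := by
  simp only [qkD]; ring

lemma qkF_perm' (C b₁ b₂ b₃ : ℝ) : qkF C b₃ b₁ b₂ = qkF C b₁ b₂ b₃ := by
  rw [qkF_perm, qkF_perm]

lemma qkD_perm' (C b₁ b₂ b₃ : ℝ) (G : ℝ → ℝ) (u : ℝ) :
    qkD C b₃ b₁ b₂ G u = qkD C b₁ b₂ b₃ G u := by
  simp only [qkD]; ring

/-- In the three-constant family solving the τ = 0 closed-4-form system, the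
differential ideal condition `f(fᵢfⱼ)' - f'fᵢfⱼ + 2f₁f₂f₃ - 2fᵢfⱼ(fᵢ+fⱼ) = 0`
holds for all cyclic `(i,j,k)` iff `a₁ = a₂ = a₃`. -/
theorem stmt_12 (C a₁ a₂ a₃ : ℝ) (hC : 0 < C) :
    (∀ u : ℝ, -a₁ < u → -a₂ < u → -a₃ < u →
      (qkF C a₁ a₂ a₃ u *
          qkD C a₁ a₂ a₃ (fun v => qkFi C a₁ a₂ a₃ v * qkFi C a₂ a₃ a₁ v) u
        - qkD C a₁ a₂ a₃ (qkF C a₁ a₂ a₃) u * (qkFi C a₁ a₂ a₃ u * qkFi C a₂ a₃ a₁ u)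
        + 2 * (qkFi C a₁ a₂ a₃ u * qkFi C a₂ a₃ a₁ u * qkFi C a₃ a₁ a₂ u)
        - 2 * (qkFi C a₁ a₂ a₃ u) ^ 2 * qkFi C a₂ a₃ a₁ u
        - 2 * qkFi C a₁ a₂ a₃ u * (qkFi C a₂ a₃ a₁ u) ^ 2 = 0) ∧
      (qkF C a₁ a₂ a₃ u *
          qkD C a₁ a₂ a₃ (fun v => qkFi C a₂ a₃ a₁ v * qkFi C a₃ a₁ a₂ v) u
        - qkD C a₁ a₂ a₃ (qkF C a₁ a₂ a₃) u * (qkFi C a₂ a₃ a₁ u * qkFi C a₃ a₁ a₂ u)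
        + 2 * (qkFi C a₁ a₂ a₃ u * qkFi C a₂ a₃ a₁ u * qkFi C a₃ a₁ a₂ u)
        - 2 * (qkFi C a₂ a₃ a₁ u) ^ 2 * qkFi C a₃ a₁ a₂ u
        - 2 * qkFi C a₂ a₃ a₁ u * (qkFi C a₃ a₁ a₂ u) ^ 2 = 0) ∧
      (qkF C a₁ a₂ a₃ u *
          qkD C a₁ a₂ a₃ (fun v => qkFi C a₃ a₁ a₂ v * qkFi C a₁ a₂ a₃ v) u
        - qkD C a₁ a₂ a₃ (qkF C a₁ a₂ a₃) u * (qkFi C a₃ a₁ a₂ u * qkFi C a₁ a₂ a₃ u)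
        + 2 * (qkFi C a₁ a₂ a₃ u * qkFi C a₂ a₃ a₁ u * qkFi C a₃ a₁ a₂ u)
        - 2 * (qkFi C a₃ a₁ a₂ u) ^ 2 * qkFi C a₁ a₂ a₃ u
        - 2 * qkFi C a₃ a₁ a₂ u * (qkFi C a₁ a₂ a₃ u) ^ 2 = 0))
    ↔ (a₁ = a₂ ∧ a₂ = a₃) := by
  constructor
  · intro H
    set u₀ : ℝ := |a₁| + |a₂| + |a₃| + 1 with hu₀
    have p1 : 0 < u₀ + a₁ := by
      have := neg_abs_le a₁; have := abs_nonneg a₂; have := abs_nonneg a₃; linarith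
    have p2 : 0 < u₀ + a₂ := by
      have := neg_abs_le a₂; have := abs_nonneg a₁; have := abs_nonneg a₃; linarith
    have p3 : 0 < u₀ + a₃ := by
      have := neg_abs_le a₃; have := abs_nonneg a₁; have := abs_nonneg a₂; linarith
    obtain ⟨E1, E2, E3⟩ := H u₀ (by linarith) (by linarith) (by linarith)
    have k1 := qk_key C a₁ a₂ a₃ u₀ hC p1 p2 p3
    have k2 := qk_key C a₂ a₃ a₁ u₀ hC p2 p3 p1
    have k3 := qk_key C a₃ a₁ a₂ u₀ hC p3 p1 p2
    rw [qkF_perm C a₁ a₂ a₃] at k2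
    rw [qkF_perm' C a₁ a₂ a₃] at k3
    simp only [qkD_perm C a₁ a₂ a₃] at k2
    simp only [qkD_perm' C a₁ a₂ a₃] at k3
    have r1 : (10/3) * Real.sqrt (6/C) ^ 3 * ((u₀+a₃) ^ ((1:ℝ)/9)) ^ 3
        / (((u₀+a₁) ^ ((1:ℝ)/9)) ^ 6 * ((u₀+a₂) ^ ((1:ℝ)/9)) ^ 6)
        * (2*(u₀+a₁)*(u₀+a₂) - (u₀+a₃)*(u₀+a₁) - (u₀+a₃)*(u₀+a₂)) = 0 := by
      rw [← k1]; linear_combination E1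
    have r2 : (10/3) * Real.sqrt (6/C) ^ 3 * ((u₀+a₁) ^ ((1:ℝ)/9)) ^ 3
        / (((u₀+a₂) ^ ((1:ℝ)/9)) ^ 6 * ((u₀+a₃) ^ ((1:ℝ)/9)) ^ 6)
        * (2*(u₀+a₂)*(u₀+a₃) - (u₀+a₁)*(u₀+a₂) - (u₀+a₁)*(u₀+a₃)) = 0 := by
      rw [← k2]; linear_combination E2
    have r3 : (10/3) * Real.sqrt (6/C) ^ 3 * ((u₀+a₂) ^ ((1:ℝ)/9)) ^ 3
        / (((u₀+a₃) ^ ((1:ℝ)/9)) ^ 6 * ((u₀+a₁) ^ ((1:ℝ)/9)) ^ 6)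
        * (2*(u₀+a₃)*(u₀+a₁) - (u₀+a₂)*(u₀+a₃) - (u₀+a₂)*(u₀+a₁)) = 0 := by
      rw [← k3]; linear_combination E3
    have hsp : 0 < Real.sqrt (6/C) := Real.sqrt_pos.2 (by positivity)
    have hy1 : 0 < (u₀+a₁) ^ ((1:ℝ)/9) := Real.rpow_pos_of_pos p1 _
    have hy2 : 0 < (u₀+a₂) ^ ((1:ℝ)/9) := Real.rpow_pos_of_pos p2 _
    have hy3 : 0 < (u₀+a₃) ^ ((1:ℝ)/9) := Real.rpow_pos_of_pos p3 _
    have c1 : (0:ℝ) < (10/3) * Real.sqrt (6/C) ^ 3 * ((u₀+a₃) ^ ((1:ℝ)/9)) ^ 3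
        / (((u₀+a₁) ^ ((1:ℝ)/9)) ^ 6 * ((u₀+a₂) ^ ((1:ℝ)/9)) ^ 6) :=
      div_pos (by positivity) (by positivity)
    have c2 : (0:ℝ) < (10/3) * Real.sqrt (6/C) ^ 3 * ((u₀+a₁) ^ ((1:ℝ)/9)) ^ 3
        / (((u₀+a₂) ^ ((1:ℝ)/9)) ^ 6 * ((u₀+a₃) ^ ((1:ℝ)/9)) ^ 6) :=
      div_pos (by positivity) (by positivity)
    have c3 : (0:ℝ) < (10/3) * Real.sqrt (6/C) ^ 3 * ((u₀+a₂) ^ ((1:ℝ)/9)) ^ 3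
        / (((u₀+a₃) ^ ((1:ℝ)/9)) ^ 6 * ((u₀+a₁) ^ ((1:ℝ)/9)) ^ 6) :=
      div_pos (by positivity) (by positivity)
    have q1 : 2*(u₀+a₁)*(u₀+a₂) - (u₀+a₃)*(u₀+a₁) - (u₀+a₃)*(u₀+a₂) = 0 :=
      (mul_eq_zero.1 r1).resolve_left c1.ne'
    have q2 : 2*(u₀+a₂)*(u₀+a₃) - (u₀+a₁)*(u₀+a₂) - (u₀+a₁)*(u₀+a₃) = 0 :=
      (mul_eq_zero.1 r2).resolve_left c2.ne'
    have q3 : 2*(u₀+a₃)*(u₀+a₁) - (u₀+a₂)*(u₀+a₃) - (u₀+a₂)*(u₀+a₁) = 0 :=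
      (mul_eq_zero.1 r3).resolve_left c3.ne'
    have h13 : (u₀+a₂) * ((u₀+a₁) - (u₀+a₃)) = 0 := by linear_combination (q1 - q2)/3
    have h21 : (u₀+a₃) * ((u₀+a₂) - (u₀+a₁)) = 0 := by linear_combination (q2 - q3)/3
    have e13 : (u₀+a₁) - (u₀+a₃) = 0 := (mul_eq_zero.1 h13).resolve_left p2.ne'
    have e21 : (u₀+a₂) - (u₀+a₁) = 0 := (mul_eq_zero.1 h21).resolve_left p3.ne'
    constructor <;> linarith
  · rintro ⟨rfl, rfl⟩
    intro u h1 h2 h3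
    have p : 0 < u + a₁ := by linarith
    have k := qk_key C a₁ a₁ a₁ u hC p p p
    refine ⟨?_, ?_, ?_⟩ <;> · rw [k]; ring
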